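/- Let g: ℝ → ℝ be differentiable at x, and let f̂: ℝ → I(ℝ), f̂ = [f̲, f̅], with f̲ and f̅ differentiable at x and g(x) ≠ 0 (so that g has constant sign near x). Then the product function (g·f̂)(t) = g(t)·[f̲(t), f̅(t)] (scalar multiplication of an interval) is gH-differentiable at x and (g·f̂)'(x) = [min{(g f̲)'(x), (g f̅)'(x)}, max{(g f̲)'(x), (g f̅)'(x)}]. -/

import Mathlib

open Filter

/-- Product of a real differentiable function `g` (with `g x ≠ 0`) with an interval
function `f̂ = [f̲,f̅]` whose endpoints are differentiable at `x`: the product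
`(g·f̂)(t) = g(t)·[f̲(t), f̅(t)]` (scalar multiplication of an interval, so its endpoints
are `min (g t·f̲ t) (g t·f̅ t)` and `max (g t·f̲ t) (g t·f̅ t)`) is gH-differentiable at
`x`, with `(g·f̂)'(x) = [min{(g f̲)'(x), (g f̅)'(x)}, max{(g f̲)'(x), (g f̅)'(x)}]`. -/
theorem gH_deriv_scalar_fun_mul
    (g flo fhi : ℝ → ℝ) (hle : ∀ t, flo t ≤ fhi t) (x : ℝ)
    (dg dlo dhi : ℝ)
    (hg : HasDerivAt g dg x) (hgx : g x ≠ 0)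
    (hlo : HasDerivAt flo dlo x) (hhi : HasDerivAt fhi dhi x) :
    Tendsto (fun h : ℝ =>
        min ((min (g (x + h) * flo (x + h)) (g (x + h) * fhi (x + h))
                - min (g x * flo x) (g x * fhi x)) / h)
            ((max (g (x + h) * flo (x + h)) (g (x + h) * fhi (x + h))
                - max (g x * flo x) (g x * fhi x)) / h))
      (nhdsWithin 0 {(0:ℝ)}ᶜ)
      (nhds (min (dg * flo x + g x * dlo) (dg * fhi x + g x * dhi))) ∧
    Tendsto (fun h : ℝ =>
        max ((min (g (x + h) * flo (x + h)) (g (x + h) * fhi (x + h))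
                - min (g x * flo x) (g x * fhi x)) / h)
            ((max (g (x + h) * flo (x + h)) (g (x + h) * fhi (x + h))
                - max (g x * flo x) (g x * fhi x)) / h))
      (nhdsWithin 0 {(0:ℝ)}ᶜ)
      (nhds (max (dg * flo x + g x * dlo) (dg * fhi x + g x * dhi))) := by
  have key : ∀ (p : ℝ → ℝ) (dp : ℝ), HasDerivAt p dp x →
      Tendsto (fun h : ℝ => (p (x + h) - p x) / h) (nhdsWithin 0 {(0:ℝ)}ᶜ) (nhds dp) := by
    intro p dp hp
    have := hp.tendsto_slope_zero
    simpa [div_eq_inv_mul, smul_eq_mul] using this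
  have h1 : Tendsto (fun h : ℝ => (g (x + h) * flo (x + h) - g x * flo x) / h)
      (nhdsWithin 0 {(0:ℝ)}ᶜ) (nhds (dg * flo x + g x * dlo)) :=
    key _ _ (hg.mul hlo)
  have h2 : Tendsto (fun h : ℝ => (g (x + h) * fhi (x + h) - g x * fhi x) / h)
      (nhdsWithin 0 {(0:ℝ)}ᶜ) (nhds (dg * fhi x + g x * dhi)) :=
    key _ _ (hg.mul hhi)
  have hcg : Tendsto (fun h : ℝ => g (x + h)) (nhds 0) (nhds (g x)) := by
    have hadd : Tendsto (fun h : ℝ => x + h) (nhds (0:ℝ)) (nhds x) := by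
      simpa using (continuous_add_left x).tendsto (0:ℝ)
    exact hg.continuousAt.tendsto.comp hadd
  rcases hgx.lt_or_gt with hneg | hpos
  · -- g x < 0 : min is g * fhi, max is g * flo
    have hev : ∀ᶠ h in nhdsWithin (0:ℝ) {(0:ℝ)}ᶜ, g (x + h) < 0 :=
      nhdsWithin_le_nhds (hcg.eventually (eventually_lt_nhds hneg))
    have e1 : (fun h : ℝ =>
        (min (g (x + h) * flo (x + h)) (g (x + h) * fhi (x + h))
          - min (g x * flo x) (g x * fhi x)) / h)
        =ᶠ[nhdsWithin (0:ℝ) {(0:ℝ)}ᶜ]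
        (fun h : ℝ => (g (x + h) * fhi (x + h) - g x * fhi x) / h) := by
      filter_upwards [hev] with h hh
      rw [min_eq_right (mul_le_mul_of_nonpos_left (hle _) hh.le),
        min_eq_right (mul_le_mul_of_nonpos_left (hle _) hneg.le)]
    have e2 : (fun h : ℝ =>
        (max (g (x + h) * flo (x + h)) (g (x + h) * fhi (x + h))
          - max (g x * flo x) (g x * fhi x)) / h)
        =ᶠ[nhdsWithin (0:ℝ) {(0:ℝ)}ᶜ]
        (fun h : ℝ => (g (x + h) * flo (x + h) - g x * flo x) / h) := by
      filter_upwards [hev] with h hh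
      rw [max_eq_left (mul_le_mul_of_nonpos_left (hle _) hh.le),
        max_eq_left (mul_le_mul_of_nonpos_left (hle _) hneg.le)]
    constructor
    · rw [min_comm (dg * flo x + g x * dlo)]
      refine Tendsto.congr' ?_ (h2.min h1)
      filter_upwards [e1, e2] with h a b
      rw [a, b]
    · rw [max_comm (dg * flo x + g x * dlo)]
      refine Tendsto.congr' ?_ (h2.max h1)
      filter_upwards [e1, e2] with h a b
      rw [a, b]
  · -- 0 < g x : min is g * flo, max is g * fhi
    have hev : ∀ᶠ h in nhdsWithin (0:ℝ) {(0:ℝ)}ᶜ, 0 < g (x + h) :=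
      nhdsWithin_le_nhds (hcg.eventually (eventually_gt_nhds hpos))
    have e1 : (fun h : ℝ =>
        (min (g (x + h) * flo (x + h)) (g (x + h) * fhi (x + h))
          - min (g x * flo x) (g x * fhi x)) / h)
        =ᶠ[nhdsWithin (0:ℝ) {(0:ℝ)}ᶜ]
        (fun h : ℝ => (g (x + h) * flo (x + h) - g x * flo x) / h) := by
      filter_upwards [hev] with h hh
      rw [min_eq_left (mul_le_mul_of_nonneg_left (hle _) hh.le),
        min_eq_left (mul_le_mul_of_nonneg_left (hle _) hpos.le)]
    have e2 : (fun h : ℝ =>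
        (max (g (x + h) * flo (x + h)) (g (x + h) * fhi (x + h))
          - max (g x * flo x) (g x * fhi x)) / h)
        =ᶠ[nhdsWithin (0:ℝ) {(0:ℝ)}ᶜ]
        (fun h : ℝ => (g (x + h) * fhi (x + h) - g x * fhi x) / h) := by
      filter_upwards [hev] with h hh
      rw [max_eq_right (mul_le_mul_of_nonneg_left (hle _) hh.le),
        max_eq_right (mul_le_mul_of_nonneg_left (hle _) hpos.le)]
    constructor
    · refine Tendsto.congr' ?_ (h1.min h2)
      filter_upwards [e1, e2] with h a b
      rw [a, b]
    · refine Tendsto.congr' ?_ (h1.max h2)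
      filter_upwards [e1, e2] with h a b
      rw [a, b]
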